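/- Let H be a C_2-free hypergraph (no two distinct edges share two or more vertices), x a vertex of H, and let k be minimal such that there is a semi induced matching {E_1∖{x},…,E_k∖{x}} of H/x achieving c'_{H/x} = |⋃(E_ℓ∖{x})| − k, where each E_ℓ is an edge of H. Then {E_1,…,E_k} is a semi induced matching of H; moreover if x ∈ E_i for some i, then c'_{H/x} + 1 ≤ c'_H. -/

import Mathlib

/-- A finite set `M` of edges of a hypergraph with edge set `Es` is a *semi induced
matching* if `M ⊆ Es` and the only edges of `Es` contained in `⋃ M` are the members
of `M`. -/
def SemiInducedMatching {α : Type*} [DecidableEq α]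
    (Es : Set (Finset α)) (M : Finset (Finset α)) : Prop :=
  ↑M ⊆ Es ∧ ∀ e ∈ Es, e ⊆ M.sup id → e ∈ M

/-- An *induced matching* is a semi induced matching whose edges are pairwise disjoint. -/
def InducedMatching {α : Type*} [DecidableEq α]
    (Es : Set (Finset α)) (M : Finset (Finset α)) : Prop :=
  SemiInducedMatching Es M ∧ (M : Set (Finset α)).Pairwise Disjoint

/-- The induced matching number `c_H = max { |⋃ M| - |M| : M induced matching }`. -/
noncomputable def cInd {α : Type*} [DecidableEq α] (Es : Set (Finset α)) : ℕ :=
  sSup {n : ℕ | ∃ M : Finset (Finset α),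
    InducedMatching Es M ∧ n = (M.sup id).card - M.card}

/-- The semi induced matching number `c'_H`. -/
noncomputable def cSemi {α : Type*} [DecidableEq α] (Es : Set (Finset α)) : ℕ :=
  sSup {n : ℕ | ∃ M : Finset (Finset α),
    SemiInducedMatching Es M ∧ n = (M.sup id).card - M.card}


/-- Let `H` be a `C_2`-free simple hypergraph (any two distinct edges meet
in at most one vertex), `x` a vertex, and let `k = |M|` be minimal such that
`{E ∖ {x} : E ∈ M}` (with `M` a set of `k` edges of `H`) is a semi induced matching of
the contraction `H/x` achieving `c'_{H/x} = |⋃ (E_ℓ ∖ {x})| - k`.  Then `M` is a semi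
induced matching of `H`; moreover, if `x ∈ E_i` for some `E_i ∈ M`, then
`c'_{H/x} + 1 ≤ c'_H`. -/
theorem semiInduced_lift_of_contraction {α : Type*} [DecidableEq α]
    (E : Finset (Finset α)) (x : α)
    (hne : ∀ e ∈ E, e ≠ ∅)
    (hsimple : ∀ e ∈ E, ∀ e' ∈ E, e ⊆ e' → e = e')
    (hC2 : ∀ e ∈ E, ∀ e' ∈ E, e ≠ e' → (e ∩ e').card ≤ 1)
    -- the edge set of the contraction H/x :
    (Ex : Set (Finset α))
    (hEx : Ex = {f : Finset α | f ≠ ∅ ∧ (∃ e ∈ E, f = e.erase x) ∧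
        ∀ e ∈ E, e.erase x ≠ ∅ → ¬ e.erase x ⊂ f})
    -- M = {E_1, …, E_k} is a set of k edges of H :
    (M : Finset (Finset α)) (hME : M ⊆ E)
    (hdistinct : (M.image (fun e : Finset α => e.erase x)).card = M.card)
    -- {E_1 ∖ {x}, …, E_k ∖ {x}} is a semi induced matching of H/x realizing c'_{H/x} :
    (hsemi : SemiInducedMatching Ex (M.image (fun e : Finset α => e.erase x)))
    (hval : cSemi Ex
      = ((M.image (fun e : Finset α => e.erase x)).sup id).card - (M.image (fun e : Finset α => e.erase x)).card)
    -- k is the smallest size of such a configuration :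
    (hmin : ∀ N : Finset (Finset α), N ⊆ E →
      (N.image (fun e : Finset α => e.erase x)).card = N.card →
      SemiInducedMatching Ex (N.image (fun e : Finset α => e.erase x)) →
      cSemi Ex
        = ((N.image (fun e : Finset α => e.erase x)).sup id).card - (N.image (fun e : Finset α => e.erase x)).card →
      M.card ≤ N.card) :
    SemiInducedMatching (↑E) M ∧
      ((∃ e ∈ M, x ∈ e) → cSemi Ex + 1 ≤ cSemi (α := α) ↑E) := by
  classical
  have hinj : Set.InjOn (fun e : Finset α => e.erase x) ↑M :=
    Finset.card_image_iff.mp hdistinct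
  have hsupim : ∀ N : Finset (Finset α),
      (N.image (fun e : Finset α => e.erase x)).sup id = (N.sup id).erase x := by
    intro N
    rw [Finset.sup_image]
    ext a
    simp only [Finset.mem_sup, Function.comp_apply, id_eq, Finset.mem_erase]
    constructor
    · rintro ⟨f, hf, hax, haf⟩
      exact ⟨hax, f, hf, haf⟩
    · rintro ⟨hax, f, hf, haf⟩
      exact ⟨f, hf, hax, haf⟩
  -- Part 1 : M is a semi induced matching of H
  have key : ∀ e ∈ E, e ⊆ M.sup id → e ∈ M := by
    intro e heE hesub
    by_contra heM
    have heU' : e.erase x ⊆ (M.sup id).erase x := Finset.erase_subset_erase x hesub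
    rcases eq_or_ne (e.erase x) ∅ with h0 | hne0
    · -- e = {x}
      have hex : e = {x} := by
        rcases (Finset.erase_eq_empty_iff e x).mp h0 with h | h
        · exact absurd h (hne e heE)
        · exact h
      have hxU : x ∈ M.sup id := hesub (by rw [hex]; exact Finset.mem_singleton_self x)
      obtain ⟨m, hm, hxm⟩ := Finset.mem_sup.mp hxU
      have : e = m := hsimple e heE m (hME hm) (by rw [hex]; exact Finset.singleton_subset_iff.mpr hxm)
      exact heM (this ▸ hm)
    · by_cases hEx' : e.erase x ∈ Ex
      · -- e.erase x is an edge of the contraction inside the union, hence in M'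
        have hmem : e.erase x ∈ M.image (fun e : Finset α => e.erase x) := by
          apply hsemi.2 _ hEx'
          rw [hsupim M]; exact heU'
        obtain ⟨m, hm, hme⟩ := Finset.mem_image.mp hmem
        have hem : e ≠ m := fun h => heM (h ▸ hm)
        have hsub2 : e.erase x ⊆ e ∩ m :=
          Finset.subset_inter (Finset.erase_subset x e) (hme ▸ Finset.erase_subset x m)
        have hcard1 : (e.erase x).card ≤ 1 :=
          le_trans (Finset.card_le_card hsub2) (hC2 e heE m (hME hm) hem)
        obtain ⟨v, hv⟩ := Finset.card_eq_one.mp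
          (le_antisymm hcard1 (Finset.one_le_card.mpr (Finset.nonempty_iff_ne_empty.mpr hne0)))
        have hmv : m.erase x = {v} := by rw [hme, hv]
        have he2 : e = {v} ∨ e = insert x {v} := by
          by_cases hx : x ∈ e
          · right; rw [← hv, Finset.insert_erase hx]
          · left; rw [← hv, Finset.erase_eq_self.mpr hx]
        have hm2 : m = {v} ∨ m = insert x {v} := by
          by_cases hx : x ∈ m
          · right; rw [← hmv, Finset.insert_erase hx]
          · left; rw [← hmv, Finset.erase_eq_self.mpr hx]
        rcases he2 with rfl | rfl <;> rcases hm2 with rfl | rfl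
        · exact hem rfl
        · exact hem (hsimple _ heE _ (hME hm) (Finset.singleton_subset_iff.mpr (Finset.mem_insert_of_mem (Finset.mem_singleton_self v))))
        · exact hem ((hsimple _ (hME hm) _ heE (Finset.singleton_subset_iff.mpr (Finset.mem_insert_of_mem (Finset.mem_singleton_self v)))).symm)
        · exact hem rfl
      · -- e.erase x is not minimal : there is a proper sub-edge, necessarily a singleton {v}
        have h3 : ¬ ∀ e' ∈ E, e'.erase x ≠ ∅ → ¬ e'.erase x ⊂ e.erase x := by
          intro h
          exact hEx' (by rw [hEx]; exact ⟨hne0, ⟨e, heE, rfl⟩, h⟩)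
        push_neg at h3
        obtain ⟨e', he'E, hne', hss⟩ := h3
        have hee' : e' ≠ e := by
          rintro rfl; exact (ssubset_irrefl _) hss
        have hsub2 : e'.erase x ⊆ e' ∩ e :=
          Finset.subset_inter (Finset.erase_subset x e') (hss.subset.trans (Finset.erase_subset x e))
        have hcard1 : (e'.erase x).card ≤ 1 :=
          le_trans (Finset.card_le_card hsub2) (hC2 e' he'E e heE hee')
        obtain ⟨v, hv⟩ := Finset.card_eq_one.mp
          (le_antisymm hcard1 (Finset.one_le_card.mpr hne'))
        have hvEx : ({v} : Finset α) ∈ Ex := by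
          rw [hEx]
          refine ⟨Finset.singleton_ne_empty v, ⟨e', he'E, hv.symm⟩, ?_⟩
          intro e₃ _ hn₃ hss₃
          exact hn₃ (Finset.ssubset_singleton_iff.mp hss₃)
        have hve : v ∈ e.erase x := hss.subset (hv ▸ Finset.mem_singleton_self v)
        have hvU' : v ∈ (M.sup id).erase x := heU' hve
        have hvM' : ({v} : Finset α) ∈ M.image (fun e : Finset α => e.erase x) := by
          apply hsemi.2 _ hvEx
          rw [hsupim M]
          exact Finset.singleton_subset_iff.mpr hvU'
        obtain ⟨m, hm, hmv⟩ := Finset.mem_image.mp hvM'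
        have hkey : ∀ f ∈ M, v ∈ f.erase x → f = m := by
          intro f hf hvf
          have hfEx : f.erase x ∈ Ex :=
            hsemi.1 (Finset.mem_coe.mpr (Finset.mem_image_of_mem _ hf))
          rw [hEx] at hfEx
          have hnss := hfEx.2.2 m (hME hm) (by rw [hmv]; exact Finset.singleton_ne_empty v)
          have hfv : f.erase x = {v} := by
            by_contra h
            exact hnss (by
              rw [hmv]
              exact ⟨Finset.singleton_subset_iff.mpr hvf, fun hsub => h (Finset.Subset.antisymm hsub (Finset.singleton_subset_iff.mpr hvf))⟩)
          exact hinj hf hm (hfv.trans hmv.symm)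
        set N := M.erase m with hN
        have hNM : N ⊆ M := Finset.erase_subset m M
        have hNE : N ⊆ E := hNM.trans hME
        have hinjN : Set.InjOn (fun e : Finset α => e.erase x) ↑N :=
          hinj.mono (by exact_mod_cast hNM)
        have hNcard : (N.image (fun e : Finset α => e.erase x)).card = N.card :=
          Finset.card_image_iff.mpr hinjN
        have hNcard' : N.card = M.card - 1 := Finset.card_erase_of_mem hm
        have hNim : N.image (fun e : Finset α => e.erase x)
            = (M.image (fun e : Finset α => e.erase x)).erase {v} := by
          ext g
          simp only [Finset.mem_image, Finset.mem_erase, hN]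
          constructor
          · rintro ⟨f, ⟨hfm, hfM⟩, rfl⟩
            exact ⟨fun h => hfm (hinj hfM hm (h.trans hmv.symm)), f, hfM, rfl⟩
          · rintro ⟨hgv, f, hfM, rfl⟩
            exact ⟨f, ⟨fun h => hgv (by rw [h]; exact hmv), hfM⟩, rfl⟩
        have hNsup : (N.image (fun e : Finset α => e.erase x)).sup id
            = ((M.sup id).erase x).erase v := by
          rw [hsupim N]
          ext a
          simp only [Finset.mem_erase, Finset.mem_sup, id_eq]
          constructor
          · rintro ⟨hax, f, hf, haf⟩
            rcases Finset.mem_erase.mp hf with ⟨hfm, hfM⟩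
            refine ⟨?_, hax, f, hfM, haf⟩
            rintro rfl
            exact hfm (hkey f hfM (Finset.mem_erase.mpr ⟨hax, haf⟩))
          · rintro ⟨hav, hax, f, hfM, haf⟩
            refine ⟨hax, f, Finset.mem_erase.mpr ⟨?_, hfM⟩, haf⟩
            rintro rfl
            exact hav (Finset.mem_singleton.mp (hmv ▸ Finset.mem_erase.mpr ⟨hax, haf⟩))
        have hNsemi : SemiInducedMatching Ex (N.image (fun e : Finset α => e.erase x)) := by
          constructor
          · intro g hg
            exact hsemi.1 (Finset.mem_coe.mpr
              (Finset.image_subset_image hNM (Finset.mem_coe.mp hg)))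
          · intro g hgEx hgsub
            have hg' : g ∈ M.image (fun e : Finset α => e.erase x) := by
              apply hsemi.2 _ hgEx
              rw [hsupim M]
              exact hgsub.trans (by rw [hNsup]; exact Finset.erase_subset v _)
            rw [hNim]
            refine Finset.mem_erase.mpr ⟨?_, hg'⟩
            rintro rfl
            have : v ∈ (N.image (fun e : Finset α => e.erase x)).sup id :=
              hgsub (Finset.mem_singleton_self v)
            rw [hNsup] at this
            exact (Finset.mem_erase.mp this).1 rfl
        have hval' : cSemi Ex = ((N.image (fun e : Finset α => e.erase x)).sup id).card
            - (N.image (fun e : Finset α => e.erase x)).card := by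
          rw [hNsup, hNcard, hNcard', Finset.card_erase_of_mem hvU', hval, hsupim M, hdistinct]
          have hk1 : 1 ≤ M.card := Finset.card_pos.mpr ⟨m, hm⟩
          omega
        have hle := hmin N hNE hNcard hNsemi hval'
        have hk1 : 1 ≤ M.card := Finset.card_pos.mpr ⟨m, hm⟩
        omega
  have part1 : SemiInducedMatching (↑E : Set (Finset α)) M :=
    ⟨fun f hf => Finset.mem_coe.mpr (hME (Finset.mem_coe.mp hf)),
     fun e he => key e (Finset.mem_coe.mp he)⟩
  refine ⟨part1, ?_⟩
  -- Part 2
  rintro ⟨m₀, hm₀, hxm₀⟩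
  have hxU : x ∈ M.sup id := Finset.mem_sup.mpr ⟨m₀, hm₀, hxm₀⟩
  have hUcard : ((M.sup id).erase x).card = (M.sup id).card - 1 :=
    Finset.card_erase_of_mem hxU
  have hUpos : 1 ≤ (M.sup id).card := Finset.card_pos.mpr ⟨x, hxU⟩
  have hval2 : cSemi Ex = ((M.sup id).erase x).card - M.card := by
    rw [hval, hsupim M, hdistinct]
  have hcpos : cSemi Ex ≠ 0 := by
    intro h0
    have hsemi0 : SemiInducedMatching Ex ((∅ : Finset (Finset α)).image
        (fun e : Finset α => e.erase x)) := by
      constructor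
      · intro g hg; simp at hg
      · intro g hgEx hgsub
        rw [hEx] at hgEx
        exact absurd (Finset.subset_empty.mp (by simpa using hgsub)) hgEx.1
    have hle0 := hmin ∅ (Finset.empty_subset E) (by simp) hsemi0 (by simp [h0])
    simp only [Finset.card_empty, Nat.le_zero] at hle0
    have hM0 : M = ∅ := Finset.card_eq_zero.mp hle0
    rw [hM0] at hm₀
    exact absurd hm₀ (Finset.notMem_empty m₀)
  have hbdd : BddAbove {n : ℕ | ∃ N : Finset (Finset α),
      SemiInducedMatching (↑E : Set (Finset α)) N ∧ n = (N.sup id).card - N.card} := by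
    refine ⟨(E.sup id).card, ?_⟩
    rintro n ⟨N, hN, rfl⟩
    have hNE : N ⊆ E := fun f hf => Finset.mem_coe.mp (hN.1 (Finset.mem_coe.mpr hf))
    calc (N.sup id).card - N.card ≤ (N.sup id).card := Nat.sub_le _ _
      _ ≤ (E.sup id).card := Finset.card_le_card (Finset.sup_mono hNE)
  have hmem : (M.sup id).card - M.card ∈ {n : ℕ | ∃ N : Finset (Finset α),
      SemiInducedMatching (↑E : Set (Finset α)) N ∧ n = (N.sup id).card - N.card} :=
    ⟨M, part1, rfl⟩
  have hle : (M.sup id).card - M.card ≤ cSemi (↑E : Set (Finset α)) := le_csSup hbdd hmem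
  omega
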